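/- For every λ ≥ 0 and t > 0: e⁻¹ · χ_{[0,t)}(λ) ≤ e^{−λ/t} ≤ (e − 1) · Σ_{j=1}^∞ e^{−j} χ_{[0,jt)}(λ). -/

import Mathlib

/-- For every `λ ≥ 0` and `t > 0`:
`e⁻¹ · χ_{[0,t)}(λ) ≤ e^{−λ/t} ≤ (e − 1) · Σ_{j=1}^∞ e^{−j} χ_{[0,jt)}(λ)`
(the sum is over the positive integers, written here as `j+1` with `j : ℕ`). -/
theorem statement2 (l t : ℝ) (hl : 0 ≤ l) (ht : 0 < t) :
    Real.exp (-1) * Set.indicator (Set.Ico (0:ℝ) t) 1 l ≤ Real.exp (-(l / t)) ∧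
    Real.exp (-(l / t)) ≤ (Real.exp 1 - 1) *
      ∑' j : ℕ, Real.exp (-((j : ℝ) + 1)) *
        Set.indicator (Set.Ico (0:ℝ) (((j : ℝ) + 1) * t)) 1 l := by
  have hlt : 0 ≤ l / t := div_nonneg hl ht.le
  constructor
  · by_cases h : l ∈ Set.Ico (0:ℝ) t
    · rw [Set.indicator_of_mem h, Pi.one_apply, mul_one]
      exact Real.exp_le_exp.2 (neg_le_neg ((div_le_one ht).2 h.2.le))
    · rw [Set.indicator_of_notMem h, mul_zero]; positivity
  · set r := Real.exp (-1) with hr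
    have hr0 : 0 < r := Real.exp_pos _
    have hr1 : r < 1 := by rw [hr]; exact Real.exp_lt_one_iff.2 (by norm_num)
    set m := Nat.floor (l / t) with hm
    have hf : ∀ j : ℕ, Real.exp (-((j:ℝ)+1)) * Set.indicator (Set.Ico (0:ℝ) (((j:ℝ)+1)*t)) 1 l
        = if m ≤ j then r^(j+1) else 0 := by
      intro j
      have hexp : Real.exp (-((j:ℝ)+1)) = r ^ (j+1) := by
        rw [hr, ← Real.exp_nat_mul]; congr 1; push_cast; ring
      by_cases h : m ≤ j
      · rw [if_pos h, Set.indicator_of_mem, Pi.one_apply, mul_one, hexp]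
        refine ⟨hl, ?_⟩
        have h1 : l / t < (j:ℝ) + 1 := by
          calc l / t < m + 1 := Nat.lt_floor_add_one _
          _ ≤ (j:ℝ) + 1 := by exact_mod_cast add_le_add_left (Nat.cast_le.2 h) 1
        calc l = l / t * t := by field_simp
        _ < ((j:ℝ)+1) * t := by exact mul_lt_mul_of_pos_right h1 ht
      · rw [if_neg h, Set.indicator_of_notMem, mul_zero]
        intro hmem
        have hx : l / t < (j:ℝ) + 1 := (div_lt_iff₀ ht).2 hmem.2
        exact h (Nat.lt_succ_iff.1 ((Nat.floor_lt hlt).2 (by exact_mod_cast hx)))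
    have hg : Summable (fun j : ℕ => r ^ (j+1)) := by
      simpa [pow_succ, mul_comm] using (summable_geometric_of_lt_one hr0.le hr1).mul_left r
    have hsum : Summable (fun j : ℕ => if m ≤ j then r^(j+1) else 0) :=
      Summable.of_nonneg_of_le (fun j => by split <;> positivity)
        (fun j => by split <;> [exact le_rfl; positivity]) hg
    rw [tsum_congr hf]
    have hkey : ∑' j : ℕ, (if m ≤ j then r^(j+1) else 0) = r^(m+1) * (1-r)⁻¹ := by
      rw [← hsum.sum_add_tsum_nat_add m]
      have h1 : ∑ i ∈ Finset.range m, (if m ≤ i then r^(i+1) else 0) = 0 := by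
        apply Finset.sum_eq_zero; intro i hi
        rw [if_neg (Nat.not_le.2 (Finset.mem_range.1 hi))]
      rw [h1, zero_add]
      have h2 : ∀ i : ℕ, (if m ≤ i + m then r^(i+m+1) else 0) = r^(m+1) * r^i := by
        intro i; rw [if_pos (Nat.le_add_left m i)]; ring
      rw [tsum_congr h2, tsum_mul_left, tsum_geometric_of_lt_one hr0.le hr1]
    rw [hkey]
    have hfact : (Real.exp 1 - 1) * (r^(m+1) * (1-r)⁻¹) = Real.exp (-(m:ℝ)) := by
      have h1 : (1:ℝ) - r ≠ 0 := by linarith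
      have h2 : Real.exp 1 * r = 1 := by rw [hr, ← Real.exp_add]; norm_num
      have h3 : r ^ (m+1) = Real.exp (-((m:ℝ)+1)) := by
        rw [hr, ← Real.exp_nat_mul]; congr 1; push_cast; ring
      have h4 : Real.exp 1 - 1 = Real.exp 1 * (1 - r) := by
        rw [mul_sub, h2, mul_one]
      have h5 : Real.exp 1 * Real.exp (-((m:ℝ)+1)) = Real.exp (-(m:ℝ)) := by
        rw [← Real.exp_add]; congr 1; ring
      calc (Real.exp 1 - 1) * (r^(m+1) * (1-r)⁻¹)
          = Real.exp 1 * Real.exp (-((m:ℝ)+1)) * ((1-r) * (1-r)⁻¹) := by rw [h4, h3]; ring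
        _ = Real.exp (-(m:ℝ)) := by rw [mul_inv_cancel₀ h1, mul_one, h5]
    rw [hfact]
    exact Real.exp_le_exp.2 (neg_le_neg (Nat.floor_le hlt))
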